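/- Let t₄ = √(2+√2). For t ∈ ℝ let G_{ij}(t) = u_i(t)·v_j(t) − u_j(t)·v_i(t) for 1 ≤ i < j ≤ 8, where u(t) = (−t, 0, t, 2+√2, (1+√2)t, 1+√2, (1+√2)t, 2+√2) and v(t) = (0, 1, t, 1+√2, √2·t, 1+√2, t, 1). Then for all integers a, b, c and all 1 ≤ i < j < k ≤ 8: if a·G_{jk}(t₄) − b·G_{ik}(t₄) + c·G_{ij}(t₄) = 0, then a·G_{jk}(t) − b·G_{ik}(t) + c·G_{ij}(t) = 0 for every real t ≠ 0. -/
import Mathlib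


/-- `u t`, the first basis vector of the plane `E_t` (16-fold family). -/
noncomputable def u16 (t : ℝ) : Fin 8 → ℝ :=
  ![-t, 0, t, 2 + Real.sqrt 2, (1 + Real.sqrt 2) * t, 1 + Real.sqrt 2,
    (1 + Real.sqrt 2) * t, 2 + Real.sqrt 2]

/-- `v t`, the second basis vector of the plane `E_t` (16-fold family). -/
noncomputable def v16 (t : ℝ) : Fin 8 → ℝ :=
  ![0, 1, t, 1 + Real.sqrt 2, Real.sqrt 2 * t, 1 + Real.sqrt 2, t, 1]

/-- Grassmann coordinates of `E_t`. -/
noncomputable def G16 (t : ℝ) (i j : Fin 8) : ℝ := u16 t i * v16 t j - u16 t j * v16 t i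

@[simp] lemma vec8_0 {α : Type*} (a0 a1 a2 a3 a4 a5 a6 a7 : α) :
    ![a0,a1,a2,a3,a4,a5,a6,a7] (0 : Fin 8) = a0 := rfl
@[simp] lemma vec8_1 {α : Type*} (a0 a1 a2 a3 a4 a5 a6 a7 : α) :
    ![a0,a1,a2,a3,a4,a5,a6,a7] (1 : Fin 8) = a1 := rfl
@[simp] lemma vec8_2 {α : Type*} (a0 a1 a2 a3 a4 a5 a6 a7 : α) :
    ![a0,a1,a2,a3,a4,a5,a6,a7] (2 : Fin 8) = a2 := rfl
@[simp] lemma vec8_3 {α : Type*} (a0 a1 a2 a3 a4 a5 a6 a7 : α) :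
    ![a0,a1,a2,a3,a4,a5,a6,a7] (3 : Fin 8) = a3 := rfl
@[simp] lemma vec8_4 {α : Type*} (a0 a1 a2 a3 a4 a5 a6 a7 : α) :
    ![a0,a1,a2,a3,a4,a5,a6,a7] (4 : Fin 8) = a4 := rfl
@[simp] lemma vec8_5 {α : Type*} (a0 a1 a2 a3 a4 a5 a6 a7 : α) :
    ![a0,a1,a2,a3,a4,a5,a6,a7] (5 : Fin 8) = a5 := rfl
@[simp] lemma vec8_6 {α : Type*} (a0 a1 a2 a3 a4 a5 a6 a7 : α) :
    ![a0,a1,a2,a3,a4,a5,a6,a7] (6 : Fin 8) = a6 := rfl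
@[simp] lemma vec8_7 {α : Type*} (a0 a1 a2 a3 a4 a5 a6 a7 : α) :
    ![a0,a1,a2,a3,a4,a5,a6,a7] (7 : Fin 8) = a7 := rfl

def dd : Fin 8 → ℕ := ![1, 0, 1, 0, 1, 0, 1, 0]
def up : Fin 8 → ℤ := ![-1, 0, 1, 2, 1, 1, 1, 2]
def uq : Fin 8 → ℤ := ![0, 0, 0, 1, 1, 1, 1, 1]
def vp : Fin 8 → ℤ := ![0, 1, 1, 1, 0, 1, 1, 1]
def vq : Fin 8 → ℤ := ![0, 0, 0, 1, 1, 1, 0, 0]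

def gp (i j : Fin 8) : ℤ := up i * vp j + 2 * (uq i * vq j) - up j * vp i - 2 * (uq j * vq i)
def gq (i j : Fin 8) : ℤ := up i * vq j + uq i * vp j - up j * vq i - uq j * vp i

lemma hu (t : ℝ) (i : Fin 8) : u16 t i = ((up i : ℝ) + uq i * Real.sqrt 2) * t ^ dd i := by
  fin_cases i <;> simp [u16, up, uq, dd]

lemma hv (t : ℝ) (i : Fin 8) : v16 t i = ((vp i : ℝ) + vq i * Real.sqrt 2) * t ^ dd i := by
  fin_cases i <;> simp [v16, vp, vq, dd]

lemma hG (t : ℝ) (i j : Fin 8) :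
    G16 t i j = ((gp i j : ℝ) + gq i j * Real.sqrt 2) * t ^ (dd i + dd j) := by
  have hs : Real.sqrt 2 ^ 2 = 2 := Real.sq_sqrt (by norm_num)
  rw [G16, hu, hu, hv, hv, gp, gq, pow_add]
  push_cast
  linear_combination ((uq i : ℝ) * vq j - uq j * vq i) * t ^ dd i * t ^ dd j * hs

/-- classic: r² = 2w² over ℤ forces r = w = 0 -/
lemma int_sq' (r w : ℤ) (h : r^2 = 2*w^2) : r = 0 ∧ w = 0 := by
  by_cases hw : w = 0
  · subst hw; constructor
    · nlinarith
    · rfl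
  · exfalso
    apply irrational_sqrt_two
    refine ⟨|(r:ℚ)/(w:ℚ)|, ?_⟩
    have hw' : (w:ℝ) ≠ 0 := by exact_mod_cast hw
    have h1 : (|(r:ℝ)/(w:ℝ)|)^2 = 2 := by
      rw [sq_abs, div_pow]
      rw [div_eq_iff (by positivity)]
      exact_mod_cast h
    have h2 : Real.sqrt 2 = |(r:ℝ)/(w:ℝ)| := by
      rw [← h1, Real.sqrt_sq (abs_nonneg _)]
    rw [h2]; push_cast; rw [abs_div]

lemma sqrt2_lin (p q : ℤ) (h : (p:ℝ) + q * Real.sqrt 2 = 0) : p = 0 ∧ q = 0 := by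
  by_cases hq : q = 0
  · subst hq; constructor
    · exact_mod_cast by simpa using h
    · rfl
  · exfalso
    apply irrational_sqrt_two
    refine ⟨-(p:ℚ)/(q:ℚ), ?_⟩
    have hq' : (q:ℝ) ≠ 0 := by exact_mod_cast hq
    push_cast
    field_simp
    linarith

/-- √(2+√2) is not in ℚ(√2) -/
lemma keyT (p q r w : ℤ)
    (h : (p:ℝ) + q * Real.sqrt 2 + ((r:ℝ) + w * Real.sqrt 2) * Real.sqrt (2 + Real.sqrt 2) = 0) :
    (p:ℝ) + q * Real.sqrt 2 = 0 ∧ (r:ℝ) + w * Real.sqrt 2 = 0 := by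
  have hs0 : (0:ℝ) ≤ Real.sqrt 2 := Real.sqrt_nonneg 2
  have hs2 : Real.sqrt 2 ^ 2 = 2 := Real.sq_sqrt (by norm_num)
  have hT2 : Real.sqrt (2 + Real.sqrt 2) ^ 2 = 2 + Real.sqrt 2 :=
    Real.sq_sqrt (by positivity)
  have hB : (r:ℝ) + w * Real.sqrt 2 = 0 := by
    by_contra hB
    -- square both sides
    have e : ((p:ℝ) + q * Real.sqrt 2)^2 = ((r:ℝ) + w * Real.sqrt 2)^2 * (2 + Real.sqrt 2) := by
      have hA : (p:ℝ) + q * Real.sqrt 2 = -(((r:ℝ) + w * Real.sqrt 2) * Real.sqrt (2 + Real.sqrt 2)) := by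
        linarith
      rw [hA]; rw [neg_pow, mul_pow, hT2]; ring
    have e2 : ((p^2 + 2*q^2 - 2*r^2 - 4*r*w - 4*w^2 : ℤ) : ℝ)
        + ((2*p*q - r^2 - 4*r*w - 2*w^2 : ℤ) : ℝ) * Real.sqrt 2 = 0 := by
      push_cast
      linear_combination e - ((q:ℝ)^2 - 2*w^2 - 2*r*w - w^2 * Real.sqrt 2) * hs2
    obtain ⟨h1, h2⟩ := sqrt2_lin _ _ e2
    have hXY : (p^2 - 2*q^2)^2 = 2 * (r^2 - 2*w^2)^2 := by nlinarith [h1, h2]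
    obtain ⟨hX, hY⟩ := int_sq' _ _ hXY
    have hrw : r^2 = 2*w^2 := by linarith
    obtain ⟨hr0, hw0⟩ := int_sq' _ _ hrw
    apply hB
    rw [hr0, hw0]; push_cast; ring
  refine ⟨?_, hB⟩
  rw [hB] at h; linarith [h]

theorem stmt_18 (a b c : ℤ) (i j k : Fin 8) (hij : i < j) (hjk : j < k)
    (h : (a : ℝ) * G16 (Real.sqrt (2 + Real.sqrt 2)) j k
        - (b : ℝ) * G16 (Real.sqrt (2 + Real.sqrt 2)) i k
        + (c : ℝ) * G16 (Real.sqrt (2 + Real.sqrt 2)) i j = 0) :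
    ∀ t : ℝ, t ≠ 0 → (a : ℝ) * G16 t j k - (b : ℝ) * G16 t i k + (c : ℝ) * G16 t i j = 0 := by
  intro t ht
  set s : ℝ := Real.sqrt 2 with hs_def
  set T : ℝ := Real.sqrt (2 + Real.sqrt 2) with hT_def
  have hs0 : (0:ℝ) ≤ s := Real.sqrt_nonneg 2
  have hT2 : T ^ 2 = 2 + s := Real.sq_sqrt (by positivity)
  have hTpos : 0 < T := Real.sqrt_pos.mpr (by positivity)
  have hTne : T ≠ 0 := ne_of_gt hTpos
  have h2s : (0:ℝ) < 2 + s := by positivity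
  simp only [hG] at h ⊢
  have hdd : ∀ m : Fin 8, dd m = 0 ∨ dd m = 1 := by decide
  rcases hdd i with hdi | hdi <;> rcases hdd j with hdj | hdj <;> rcases hdd k with hdk | hdk <;>
    rw [hdi, hdj, hdk] at h ⊢ <;> norm_num at h ⊢
  -- case (0,0,0): exponents (0,0,0)
  · linear_combination h
  -- case (0,0,1): exponents (1,1,0)
  · obtain ⟨hA, hB⟩ := keyT (c * gp i j) (c * gq i j) (a * gp j k - b * gp i k)
      (a * gq j k - b * gq i k) (by push_cast; linear_combination h)
    push_cast at hA hB
    linear_combination hA + t * hB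
  -- case (0,1,0): exponents (1,0,1)
  · obtain ⟨hA, hB⟩ := keyT (-(b * gp i k)) (-(b * gq i k)) (a * gp j k + c * gp i j)
      (a * gq j k + c * gq i j) (by push_cast; linear_combination h)
    push_cast at hA hB
    linear_combination hA + t * hB
  -- case (0,1,1): exponents (2,1,1): divide by T
  · obtain ⟨hA, hB⟩ := keyT (c * gp i j - b * gp i k) (c * gq i j - b * gq i k)
      (a * gp j k) (a * gq j k)
      (mul_left_cancel₀ hTne (by push_cast; linear_combination h))
    push_cast at hA hB
    linear_combination t * hA + t^2 * hB
  -- case (1,0,0): exponents (0,1,1)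
  · obtain ⟨hA, hB⟩ := keyT (a * gp j k) (a * gq j k) (c * gp i j - b * gp i k)
      (c * gq i j - b * gq i k) (by push_cast; linear_combination h)
    push_cast at hA hB
    linear_combination hA + t * hB
  -- case (1,0,1): exponents (1,2,1)
  · obtain ⟨hA, hB⟩ := keyT (a * gp j k + c * gp i j) (a * gq j k + c * gq i j)
      (-(b * gp i k)) (-(b * gq i k))
      (mul_left_cancel₀ hTne (by push_cast; linear_combination h))
    push_cast at hA hB
    linear_combination t * hA + t^2 * hB
  -- case (1,1,0): exponents (1,1,2)
  · obtain ⟨hA, hB⟩ := keyT (a * gp j k - b * gp i k) (a * gq j k - b * gq i k)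
      (c * gp i j) (c * gq i j)
      (mul_left_cancel₀ hTne (by push_cast; linear_combination h))
    push_cast at hA hB
    linear_combination t * hA + t^2 * hB
  -- case (1,1,1): exponents (2,2,2)
  · have hC : (a:ℝ) * ((gp j k : ℝ) + gq j k * s) - b * ((gp i k : ℝ) + gq i k * s)
        + c * ((gp i j : ℝ) + gq i j * s) = 0 := by
      apply mul_left_cancel₀ (ne_of_gt h2s)
      linear_combination h - ((a:ℝ) * ((gp j k : ℝ) + gq j k * s) - b * ((gp i k : ℝ) + gq i k * s)
        + c * ((gp i j : ℝ) + gq i j * s)) * hT2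
    linear_combination t^2 * hC
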